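/- Let Φ ∈ ℝ^{m×n}, let T ⊆ {1,…,n} with #T = s, and let k ≥ 1. Assume Φ satisfies the RIP of order s+2k with radius δ_{s+2k} ∈ (0,1) and the RIP of order 2k with radius δ_{2k} ∈ (0,1), and that δ_{2k}² + 2δ_{s+2k} < 1. Let x ∈ ℝⁿ, let y = Φx (noiseless measurements), and let x* solve iBPDN with ε = 0. Set r = x − x_T, let T₀ be a set of k largest-magnitude entries of r, and let μ = √(δ_{s+2k}² + δ_{2k}²). Then ‖x_{Tᶜ} − x*_{Tᶜ}‖₂ ≤ ‖x − x*‖₂ ≤ D·k^{−1/2}‖r − r_{T₀}‖₁, where D = 2(1 + μ − δ_{s+2k})/(1 − δ_{s+2k} − μ). -/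

import Mathlib

open scoped BigOperators

/-- The Euclidean (ℓ₂) norm of a vector. -/
noncomputable def l2 {d : ℕ} (u : Fin d → ℝ) : ℝ := Real.sqrt (∑ i, (u i) ^ 2)

/-- The ℓ₁ norm of a vector. -/
noncomputable def l1 {d : ℕ} (u : Fin d → ℝ) : ℝ := ∑ i, |u i|

/-- `restr S u` equals `u` on `S` and `0` outside `S`. -/
def restr {n : ℕ} (S : Finset (Fin n)) (u : Fin n → ℝ) : Fin n → ℝ :=
  fun i => if i ∈ S then u i else 0

/-- Restricted Isometry Property of order `q` with radius `δ`. -/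
def RIP {m n : ℕ} (Φ : Matrix (Fin m) (Fin n) ℝ) (q : ℕ) (δ : ℝ) : Prop :=
  ∀ u : Fin n → ℝ, (Function.support u).ncard ≤ q →
    (1 - δ) * (l2 u) ^ 2 ≤ (l2 (Φ.mulVec u)) ^ 2 ∧
    (l2 (Φ.mulVec u)) ^ 2 ≤ (1 + δ) * (l2 u) ^ 2

/-- `xs` solves the innovative Basis Pursuit DeNoise program. -/
def solvesIBPDN {m n : ℕ} (Φ : Matrix (Fin m) (Fin n) ℝ) (y : Fin m → ℝ) (ε : ℝ)
    (T : Finset (Fin n)) (xs : Fin n → ℝ) : Prop :=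
  l2 (y - Φ.mulVec xs) ≤ ε ∧
  ∀ u : Fin n → ℝ, l2 (y - Φ.mulVec u) ≤ ε → l1 (restr Tᶜ xs) ≤ l1 (restr Tᶜ u)

/-- `S` is a set of largest-magnitude entries of `r`. -/
def isLargest {n : ℕ} (r : Fin n → ℝ) (S : Finset (Fin n)) : Prop :=
  ∀ i ∈ S, ∀ j ∉ S, |r j| ≤ |r i|

namespace IBPDNaux

lemma sum_sq_nonneg {d : ℕ} (u : Fin d → ℝ) : 0 ≤ ∑ i, u i ^ 2 :=
  Finset.sum_nonneg fun i _ => sq_nonneg _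

lemma l2_nonneg {d : ℕ} (u : Fin d → ℝ) : 0 ≤ l2 u := Real.sqrt_nonneg _

lemma l2_sq {d : ℕ} (u : Fin d → ℝ) : l2 u ^ 2 = ∑ i, u i ^ 2 :=
  Real.sq_sqrt (sum_sq_nonneg u)

lemma l1_nonneg {d : ℕ} (u : Fin d → ℝ) : 0 ≤ l1 u :=
  Finset.sum_nonneg fun i _ => abs_nonneg _

lemma l2_zero {d : ℕ} : l2 (0 : Fin d → ℝ) = 0 := by simp [l2]

lemma l2_eq_zero {d : ℕ} {u : Fin d → ℝ} (h : l2 u = 0) : u = 0 := by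
  have h2 : ∑ i, u i ^ 2 = 0 := by rw [← l2_sq, h]; ring
  funext i
  have := (Finset.sum_eq_zero_iff_of_nonneg (fun i _ => sq_nonneg (u i))).1 h2 i (Finset.mem_univ i)
  exact pow_eq_zero_iff (two_ne_zero) |>.1 this

lemma l2_eq_norm {d : ℕ} (u : Fin d → ℝ) :
    l2 u = ‖(WithLp.equiv 2 (Fin d → ℝ)).symm u‖ := by
  rw [EuclideanSpace.norm_eq]
  simp [l2, sq_abs]

lemma l2_add_le {d : ℕ} (u v : Fin d → ℝ) : l2 (u + v) ≤ l2 u + l2 v := by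
  rw [l2_eq_norm, l2_eq_norm, l2_eq_norm]
  exact norm_add_le ((WithLp.equiv 2 (Fin d → ℝ)).symm u) ((WithLp.equiv 2 (Fin d → ℝ)).symm v)

lemma l2_smul {d : ℕ} (c : ℝ) (u : Fin d → ℝ) : l2 (c • u) = |c| * l2 u := by
  have : ∑ i, (c • u) i ^ 2 = c ^ 2 * ∑ i, u i ^ 2 := by
    rw [Finset.mul_sum]; exact Finset.sum_congr rfl fun i _ => by simp [mul_pow]
  rw [l2, this, Real.sqrt_mul (sq_nonneg c), Real.sqrt_sq_eq_abs, l2]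

lemma l2_sq_add {d : ℕ} (u v : Fin d → ℝ) :
    l2 (u + v) ^ 2 = l2 u ^ 2 + 2 * dotProduct u v + l2 v ^ 2 := by
  simp only [l2_sq, dotProduct]
  rw [Finset.mul_sum, ← Finset.sum_add_distrib, ← Finset.sum_add_distrib]
  exact Finset.sum_congr rfl fun i _ => by simp [Pi.add_apply]; ring

lemma l2_sq_sub {d : ℕ} (u v : Fin d → ℝ) :
    l2 (u - v) ^ 2 = l2 u ^ 2 - 2 * dotProduct u v + l2 v ^ 2 := by
  simp only [l2_sq, dotProduct]
  rw [Finset.mul_sum, ← Finset.sum_sub_distrib, ← Finset.sum_add_distrib]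
  exact Finset.sum_congr rfl fun i _ => by simp [Pi.sub_apply]; ring

lemma l2_restr_le {n : ℕ} (S : Finset (Fin n)) (u : Fin n → ℝ) : l2 (restr S u) ≤ l2 u := by
  apply Real.sqrt_le_sqrt
  apply Finset.sum_le_sum
  intro i _
  by_cases h : i ∈ S <;> simp [restr, h, sq_nonneg]

lemma l1_restr {n : ℕ} (S : Finset (Fin n)) (u : Fin n → ℝ) :
    l1 (restr S u) = ∑ i ∈ S, |u i| := by
  rw [l1, ← Finset.sum_subset (Finset.subset_univ S)]
  · exact Finset.sum_congr rfl fun i hi => by simp [restr, hi]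
  · intro i _ hi; simp [restr, hi]

lemma l2_sq_restr {n : ℕ} (S : Finset (Fin n)) (u : Fin n → ℝ) :
    l2 (restr S u) ^ 2 = ∑ i ∈ S, u i ^ 2 := by
  rw [l2_sq, ← Finset.sum_subset (Finset.subset_univ S)]
  · exact Finset.sum_congr rfl fun i hi => by simp [restr, hi]
  · intro i _ hi; simp [restr, hi]


lemma ncard_support_le {n : ℕ} {u : Fin n → ℝ} {S : Finset (Fin n)}
    (h : ∀ i, u i ≠ 0 → i ∈ S) : (Function.support u).ncard ≤ S.card := by
  have hsub : Function.support u ⊆ ↑S := fun i hi => h i hi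
  calc (Function.support u).ncard ≤ (↑S : Set (Fin n)).ncard :=
        Set.ncard_le_ncard hsub (Set.toFinite _)
    _ = S.card := Set.ncard_coe_finset S

lemma ncard_support_restr_le {n : ℕ} (S : Finset (Fin n)) (u : Fin n → ℝ) :
    (Function.support (restr S u)).ncard ≤ S.card := by
  apply ncard_support_le
  intro i hi
  by_contra hc
  simp [restr, hc] at hi

lemma dp_zero_of_disj {d : ℕ} {u v : Fin d → ℝ} (h : ∀ i, u i = 0 ∨ v i = 0) :
    dotProduct u v = 0 := by
  apply Finset.sum_eq_zero
  intro i _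
  rcases h i with h0 | h0 <;> simp [h0]

lemma l2_sq_add_disj {d : ℕ} {u v : Fin d → ℝ} (h : ∀ i, u i = 0 ∨ v i = 0) :
    l2 (u + v) ^ 2 = l2 u ^ 2 + l2 v ^ 2 := by
  rw [l2_sq_add, dp_zero_of_disj h]; ring

lemma cross {m n : ℕ} {Φ : Matrix (Fin m) (Fin n) ℝ} {q : ℕ} {δ : ℝ}
    (hR : RIP Φ q δ) {a b : Fin n → ℝ}
    (hd : ∀ i, a i = 0 ∨ b i = 0)
    (hcard : (Function.support a).ncard + (Function.support b).ncard ≤ q) :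
    |dotProduct (Φ.mulVec a) (Φ.mulVec b)| ≤ δ * (l2 a * l2 b) := by
  rcases eq_or_lt_of_le (l2_nonneg a) with hA | hA
  · have ha : a = 0 := l2_eq_zero hA.symm
    simp [ha, Matrix.mulVec_zero, zero_dotProduct, l2_zero]
  rcases eq_or_lt_of_le (l2_nonneg b) with hB | hB
  · have hb : b = 0 := l2_eq_zero hB.symm
    simp [hb, Matrix.mulVec_zero, dotProduct_zero, l2_zero]
  set A := l2 a with hA'
  set B := l2 b with hB'
  set a' := A⁻¹ • a with ha'
  set b' := B⁻¹ • b with hb'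
  have hA1 : l2 a' = 1 := by rw [ha', l2_smul, abs_of_pos (inv_pos.2 hA), inv_mul_cancel₀ hA.ne']
  have hB1 : l2 b' = 1 := by rw [hb', l2_smul, abs_of_pos (inv_pos.2 hB), inv_mul_cancel₀ hB.ne']
  have hd' : ∀ i, a' i = 0 ∨ b' i = 0 := by
    intro i; rcases hd i with h0 | h0
    · left; simp [ha', h0]
    · right; simp [hb', h0]
  have hsupadd : ∀ (w : Fin n → ℝ), Function.support w ⊆ Function.support a' ∪ Function.support b' →
      (Function.support w).ncard ≤ q := by
    intro w hw
    have h1 : Function.support a' ⊆ Function.support a := by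
      intro i hi; simp only [Function.mem_support] at hi ⊢
      intro hc; apply hi; simp [ha', hc]
    have h2 : Function.support b' ⊆ Function.support b := by
      intro i hi; simp only [Function.mem_support] at hi ⊢
      intro hc; apply hi; simp [hb', hc]
    calc (Function.support w).ncard ≤ (Function.support a ∪ Function.support b).ncard := by
          apply Set.ncard_le_ncard _ (Set.toFinite _)
          exact hw.trans (Set.union_subset_union h1 h2)
      _ ≤ (Function.support a).ncard + (Function.support b).ncard := Set.ncard_union_le _ _
      _ ≤ q := hcard
  have hplus := hR (a' + b') (hsupadd _ (Function.support_add a' b'))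
  have hminus := hR (a' - b') (by
    apply hsupadd
    have := Function.support_sub a' b'
    exact this)
  have hab2 : l2 (a' + b') ^ 2 = 2 := by rw [l2_sq_add_disj hd', hA1, hB1]; norm_num
  have hab2' : l2 (a' - b') ^ 2 = 2 := by
    have hdneg : ∀ i, a' i = 0 ∨ (-b') i = 0 := by
      intro i
      rcases hd' i with h0 | h0
      · exact Or.inl h0
      · right; simp [h0]
    have hnegb : l2 (-b') = l2 b' := by
      have := l2_smul (-1 : ℝ) b'
      simpa using this
    rw [sub_eq_add_neg, l2_sq_add_disj hdneg, hA1, hnegb, hB1]; norm_num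
  have e1 : l2 (Φ.mulVec (a' + b')) ^ 2
      = l2 (Φ.mulVec a') ^ 2 + 2 * dotProduct (Φ.mulVec a') (Φ.mulVec b') + l2 (Φ.mulVec b') ^ 2 := by
    rw [Matrix.mulVec_add, l2_sq_add]
  have e2 : l2 (Φ.mulVec (a' - b')) ^ 2
      = l2 (Φ.mulVec a') ^ 2 - 2 * dotProduct (Φ.mulVec a') (Φ.mulVec b') + l2 (Φ.mulVec b') ^ 2 := by
    rw [Matrix.mulVec_sub, l2_sq_sub]
  have habs : |dotProduct (Φ.mulVec a') (Φ.mulVec b')| ≤ δ := by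
    rw [abs_le]
    constructor
    · nlinarith [hplus.1, hminus.2, hab2, hab2']
    · nlinarith [hplus.2, hminus.1, hab2, hab2']
  have hfact : dotProduct (Φ.mulVec a) (Φ.mulVec b)
      = A * B * dotProduct (Φ.mulVec a') (Φ.mulVec b') := by
    rw [ha', hb', Matrix.mulVec_smul, Matrix.mulVec_smul, smul_dotProduct,
      dotProduct_smul, smul_eq_mul, smul_eq_mul]
    field_simp
  rw [hfact, abs_mul, abs_of_pos (by positivity : (0:ℝ) < A * B)]
  calc A * B * |dotProduct (Φ.mulVec a') (Φ.mulVec b')| ≤ A * B * δ := by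
        apply mul_le_mul_of_nonneg_left habs (by positivity)
    _ = δ * (A * B) := by ring


lemma list_sum_le {α : Type*} (L : List α) (f g : α → ℝ) (h : ∀ a ∈ L, f a ≤ g a) :
    (L.map f).sum ≤ (L.map g).sum := by
  induction L with
  | nil => simp
  | cons a L ih =>
    simp only [List.map_cons, List.sum_cons]
    have := h a List.mem_cons_self
    have := ih fun b hb => h b (List.mem_cons_of_mem a hb)
    linarith

lemma list_sum_mul {α : Type*} (L : List α) (c : ℝ) (f : α → ℝ) :
    (L.map fun a => c * f a).sum = c * (L.map f).sum := by
  induction L with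
  | nil => simp
  | cons a L ih => simp only [List.map_cons, List.sum_cons, ih]; ring

lemma list_sum_nonneg {α : Type*} (L : List α) (f : α → ℝ) (h : ∀ a ∈ L, 0 ≤ f a) :
    0 ≤ (L.map f).sum := by
  have := list_sum_le L (fun _ => (0:ℝ)) f h
  simpa using this

lemma l2_list_sum_le {d : ℕ} (L : List (Fin d → ℝ)) : l2 L.sum ≤ (L.map l2).sum := by
  induction L with
  | nil => simp [l2_zero]
  | cons a L ih =>
    simp only [List.sum_cons, List.map_cons]
    calc l2 (a + L.sum) ≤ l2 a + l2 L.sum := l2_add_le _ _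
      _ ≤ l2 a + (L.map l2).sum := by linarith

lemma mulVec_list_sum {m n : ℕ} (Φ : Matrix (Fin m) (Fin n) ℝ) (L : List (Fin n → ℝ)) :
    Φ.mulVec L.sum = (L.map Φ.mulVec).sum := by
  induction L with
  | nil => simp [Matrix.mulVec_zero]
  | cons a L ih => simp only [List.sum_cons, List.map_cons, Matrix.mulVec_add, ih]

lemma dp_list_sum {d : ℕ} (u : Fin d → ℝ) (L : List (Fin d → ℝ)) :
    dotProduct u L.sum = (L.map fun w => dotProduct u w).sum := by
  induction L with
  | nil => simp
  | cons a L ih => simp only [List.sum_cons, List.map_cons, dotProduct_add, ih]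

lemma restr_restr {n : ℕ} {C S : Finset (Fin n)} (h : C ⊆ S) (v : Fin n → ℝ) :
    restr C (restr S v) = restr C v := by
  funext i
  by_cases hi : i ∈ C
  · simp [restr, hi, h hi]
  · simp [restr, hi]

lemma restr_add_sdiff {n : ℕ} {B S : Finset (Fin n)} (hBS : B ⊆ S) {v : Fin n → ℝ}
    (hv : ∀ i, i ∉ S → v i = 0) : restr B v + restr (S \ B) v = v := by
  funext i
  by_cases hiB : i ∈ B
  · simp [restr, hiB, Finset.mem_sdiff]
  · by_cases hiS : i ∈ S
    · simp [restr, hiB, hiS, Finset.mem_sdiff]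
    · simp [restr, hiB, hiS, Finset.mem_sdiff, hv i hiS]

lemma l1_split {n : ℕ} {B S : Finset (Fin n)} (hBS : B ⊆ S) {v : Fin n → ℝ}
    (hv : ∀ i, i ∉ S → v i = 0) :
    l1 v = l1 (restr B v) + l1 (restr (S \ B) v) := by
  simp only [l1, ← Finset.sum_add_distrib]
  apply Finset.sum_congr rfl
  intro i _
  by_cases hiB : i ∈ B
  · simp [restr, hiB, Finset.mem_sdiff]
  · by_cases hiS : i ∈ S
    · simp [restr, hiB, hiS, Finset.mem_sdiff]
    · simp [restr, hiB, hiS, Finset.mem_sdiff, hv i hiS]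

lemma topk {n : ℕ} (f : Fin n → ℝ) :
    ∀ k : ℕ, ∀ S : Finset (Fin n), ∃ B, B ⊆ S ∧ B.card = min k S.card ∧
      ∀ i ∈ B, ∀ j ∈ S \ B, f j ≤ f i := by
  intro k
  induction k with
  | zero =>
    intro S
    exact ⟨∅, by simp, by simp, by simp⟩
  | succ k ih =>
    intro S
    rcases S.eq_empty_or_nonempty with rfl | hne
    · exact ⟨∅, by simp, by simp, by simp⟩
    · obtain ⟨i₀, hi₀, hmax⟩ := S.exists_max_image f hne
      obtain ⟨B', hB'sub, hB'card, hB'max⟩ := ih (S.erase i₀)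
      have hi₀B' : i₀ ∉ B' := fun hc => (Finset.mem_erase.1 (hB'sub hc)).1 rfl
      refine ⟨insert i₀ B', ?_, ?_, ?_⟩
      · apply Finset.insert_subset hi₀
        exact hB'sub.trans (Finset.erase_subset _ _)
      · rw [Finset.card_insert_of_notMem hi₀B', hB'card,
          Finset.card_erase_of_mem hi₀]
        have : 1 ≤ S.card := Finset.card_pos.2 hne
        omega
      · intro i hi j hj
        rw [Finset.mem_sdiff] at hj
        obtain ⟨hjS, hjB⟩ := hj
        have hji₀ : j ≠ i₀ := fun hc => hjB (hc ▸ Finset.mem_insert_self i₀ B')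
        rcases Finset.mem_insert.1 hi with rfl | hiB'
        · exact hmax j hjS
        · apply hB'max i hiB' j
          rw [Finset.mem_sdiff, Finset.mem_erase]
          exact ⟨⟨hji₀, hjS⟩, fun hc => hjB (Finset.mem_insert_of_mem hc)⟩


lemma sqrt_mul_inv {k : ℕ} (hk : 1 ≤ k) :
    Real.sqrt k * ((k:ℝ))⁻¹ = (Real.sqrt k)⁻¹ := by
  have hk0 : (0:ℝ) < (k:ℝ) := by exact_mod_cast hk
  have hsk : (0:ℝ) < Real.sqrt k := Real.sqrt_pos.2 hk0
  have hksq : Real.sqrt k * Real.sqrt k = (k:ℝ) := Real.mul_self_sqrt hk0.le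
  field_simp
  exact Real.sq_sqrt hk0.le

lemma blocks {n : ℕ} (k : ℕ) (hk : 1 ≤ k) :
    ∀ N : ℕ, ∀ S : Finset (Fin n), S.card ≤ N → ∀ v : Fin n → ℝ, (∀ i, i ∉ S → v i = 0) →
    ∃ B : Finset (Fin n), ∃ L : List (Finset (Fin n)),
      B ⊆ S ∧ (∀ C ∈ L, C ⊆ S \ B) ∧ B.card ≤ k ∧ (∀ C ∈ L, C.card ≤ k) ∧
      restr B v + (L.map fun C => restr C v).sum = v ∧
      (L.map fun C => l2 (restr C v)).sum ≤ (Real.sqrt k)⁻¹ * l1 v := by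
  intro N
  induction N with
  | zero =>
    intro S hS v hv
    refine ⟨S, [], Finset.Subset.refl S, by simp, ?_, by simp, ?_, ?_⟩
    · have : S.card = 0 := Nat.le_zero.1 hS
      omega
    · have : restr S v = v := by
        funext i
        by_cases hi : i ∈ S <;> simp [restr, hi, hv]
      simp [this]
    · simp only [List.map_nil, List.sum_nil]
      exact mul_nonneg (by positivity) (l1_nonneg v)
  | succ N ih =>
    intro S hS v hv
    by_cases hSk : S.card ≤ k
    · refine ⟨S, [], Finset.Subset.refl S, by simp, hSk, by simp, ?_, ?_⟩
      · have : restr S v = v := by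
          funext i
          by_cases hi : i ∈ S <;> simp [restr, hi, hv]
        simp [this]
      · simp only [List.map_nil, List.sum_nil]
        exact mul_nonneg (by positivity) (l1_nonneg v)
    · push_neg at hSk
      obtain ⟨B, hBS, hBcard, hBmax⟩ := topk (fun i => |v i|) k S
      have hBk : B.card = k := by rw [hBcard]; omega
      set S' := S \ B with hS'
      set v' := restr S' v with hv'def
      have hS'card : S'.card ≤ N := by
        rw [hS', Finset.card_sdiff_of_subset hBS]
        omega
      have hv'0 : ∀ i, i ∉ S' → v' i = 0 := by
        intro i hi; simp [hv'def, restr, hi]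
      obtain ⟨B', L', hB'sub, hL'sub, hB'card, hL'card, hsum', hbound'⟩ :=
        ih S' hS'card v' hv'0
      -- rewrite restr of v' to restr of v
      have hB'v : restr B' v' = restr B' v := restr_restr hB'sub v
      have hL'v : ∀ C ∈ L', restr C v' = restr C v := by
        intro C hC
        exact restr_restr ((hL'sub C hC).trans (Finset.sdiff_subset)) v
      have hmapeq : (L'.map fun C => restr C v') = (L'.map fun C => restr C v) :=
        List.map_congr_left hL'v
      have hmapeq2 : (L'.map fun C => l2 (restr C v')) = (L'.map fun C => l2 (restr C v)) :=
        List.map_congr_left fun C hC => by rw [hL'v C hC]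
      refine ⟨B, B' :: L', hBS, ?_, le_of_eq hBk, ?_, ?_, ?_⟩
      · intro C hC
        rcases List.mem_cons.1 hC with rfl | hC'
        · exact hB'sub
        · exact (hL'sub C hC').trans (Finset.sdiff_subset)
      · intro C hC
        rcases List.mem_cons.1 hC with rfl | hC'
        · exact hB'card
        · exact hL'card C hC'
      · -- sum identity
        have h1 : restr B' v + (L'.map fun C => restr C v).sum = v' := by
          rw [← hB'v, ← hmapeq]; exact hsum'
        calc restr B v + ((B' :: L').map fun C => restr C v).sum
            = restr B v + (restr B' v + (L'.map fun C => restr C v).sum) := by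
              simp [List.map_cons, List.sum_cons]
          _ = restr B v + v' := by rw [h1]
          _ = v := restr_add_sdiff hBS hv
      · -- the bound
        have hk0 : (0:ℝ) < (k:ℝ) := by exact_mod_cast hk
        have hsk : (0:ℝ) < Real.sqrt k := Real.sqrt_pos.2 hk0
        set c := ((k:ℝ))⁻¹ * l1 (restr B v) with hc
        have hc0 : 0 ≤ c := by
          apply mul_nonneg (by positivity) (l1_nonneg _)
        have hcb : ∀ j ∈ B', |v j| ≤ c := by
          intro j hj
          have hjS' : j ∈ S' := hB'sub hj
          have hbig : ∀ i ∈ B, |v j| ≤ |v i| := fun i hi => hBmax i hi j hjS'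
          have hsum : (k:ℝ) * |v j| ≤ l1 (restr B v) := by
            rw [l1_restr]
            calc (k:ℝ) * |v j| = ∑ _i ∈ B, |v j| := by
                  rw [Finset.sum_const, hBk, nsmul_eq_mul]
              _ ≤ ∑ i ∈ B, |v i| := Finset.sum_le_sum fun i hi => hbig i hi
          rw [hc, ← div_eq_inv_mul, le_div_iff₀ hk0]
          linarith
        have hB'l2 : l2 (restr B' v) ≤ (Real.sqrt k)⁻¹ * l1 (restr B v) := by
          have hsq : l2 (restr B' v) ^ 2 ≤ (k:ℝ) * c ^ 2 := by
            rw [l2_sq_restr]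
            calc ∑ i ∈ B', v i ^ 2 ≤ ∑ _i ∈ B', c ^ 2 := by
                  apply Finset.sum_le_sum
                  intro i hi
                  have := hcb i hi
                  calc v i ^ 2 = |v i| ^ 2 := (sq_abs _).symm
                    _ ≤ c ^ 2 := by nlinarith [abs_nonneg (v i)]
              _ = (B'.card : ℝ) * c ^ 2 := by rw [Finset.sum_const, nsmul_eq_mul]
              _ ≤ (k:ℝ) * c ^ 2 := by
                  apply mul_le_mul_of_nonneg_right _ (sq_nonneg c)
                  exact_mod_cast hB'card
          have : l2 (restr B' v) ≤ Real.sqrt ((k:ℝ) * c ^ 2) := by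
            rw [← Real.sqrt_sq (l2_nonneg (restr B' v))]
            exact Real.sqrt_le_sqrt hsq
          calc l2 (restr B' v) ≤ Real.sqrt ((k:ℝ) * c ^ 2) := this
            _ = Real.sqrt k * c := by
                rw [Real.sqrt_mul (by positivity), Real.sqrt_sq hc0]
            _ = (Real.sqrt k)⁻¹ * l1 (restr B v) := by
                rw [hc, ← mul_assoc, sqrt_mul_inv hk]
        have hsplit : l1 v = l1 (restr B v) + l1 v' := by
          rw [hv'def, hS']
          exact l1_split hBS hv
        calc ((B' :: L').map fun C => l2 (restr C v)).sum
            = l2 (restr B' v) + (L'.map fun C => l2 (restr C v)).sum := by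
              simp [List.map_cons, List.sum_cons]
          _ ≤ (Real.sqrt k)⁻¹ * l1 (restr B v) + (Real.sqrt k)⁻¹ * l1 v' := by
              rw [← hmapeq2]
              exact add_le_add hB'l2 hbound'
          _ = (Real.sqrt k)⁻¹ * l1 v := by rw [hsplit]; ring


lemma l2_sq_dp {d : ℕ} (u : Fin d → ℝ) : l2 u ^ 2 = dotProduct u u := by
  rw [l2_sq]
  simp [dotProduct, pow_two]

lemma list_sum_neg {α : Type*} (L : List α) (f : α → ℝ) :
    -((L.map f).sum) = (L.map fun a => -(f a)).sum := by
  induction L with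
  | nil => simp
  | cons a L ih => simp only [List.map_cons, List.sum_cons, ← ih]; ring

end IBPDNaux

open IBPDNaux in
set_option maxHeartbeats 1600000 in
/-- **Noiseless instance optimality of iBPDN, including the bound on `Tᶜ`.** -/
theorem ibpdn_noiseless_instance_optimality
    {m n : ℕ} (Φ : Matrix (Fin m) (Fin n) ℝ)
    (T : Finset (Fin n)) (s k : ℕ) (hs : T.card = s) (hk : 1 ≤ k)
    (δsk δk : ℝ) (hδsk : δsk ∈ Set.Ioo (0 : ℝ) 1) (hδk : δk ∈ Set.Ioo (0 : ℝ) 1)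
    (hRIPsk : RIP Φ (s + 2 * k) δsk) (hRIPk : RIP Φ (2 * k) δk)
    (hcond : δk ^ 2 + 2 * δsk < 1)
    (x : Fin n → ℝ) (y : Fin m → ℝ) (hy : y = Φ.mulVec x)
    (xstar : Fin n → ℝ) (hsol : solvesIBPDN Φ y 0 T xstar)
    (r : Fin n → ℝ) (hr : r = x - restr T x)
    (T₀ : Finset (Fin n)) (hT₀card : T₀.card = k) (hT₀ : isLargest r T₀)
    (μ : ℝ) (hμ : μ = Real.sqrt (δsk ^ 2 + δk ^ 2)) :
    l2 (restr Tᶜ x - restr Tᶜ xstar) ≤ l2 (x - xstar) ∧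
    l2 (x - xstar) ≤
      (2 * (1 + μ - δsk) / (1 - δsk - μ)) *
        ((Real.sqrt k)⁻¹ * l1 (r - restr T₀ r)) := by
  have hres : restr Tᶜ x - restr Tᶜ xstar = restr Tᶜ (x - xstar) := by
    funext i
    by_cases hi : i ∈ Tᶜ <;> simp [restr, hi]
  constructor
  · rw [hres]; exact l2_restr_le _ _
  set h := x - xstar with hh
  -- basic positivity facts
  have hk0 : (0:ℝ) < (k:ℝ) := by exact_mod_cast hk
  have hsk : (0:ℝ) < Real.sqrt k := Real.sqrt_pos.2 hk0
  have hμ0 : 0 ≤ μ := hμ ▸ Real.sqrt_nonneg _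
  have hμsq : μ ^ 2 = δsk ^ 2 + δk ^ 2 := by
    rw [hμ]; exact Real.sq_sqrt (by positivity)
  have hμlt : μ < 1 - δsk := by
    have h1 : (0:ℝ) ≤ 1 - δsk := by linarith [hδsk.2]
    have h2 : μ ^ 2 < (1 - δsk) ^ 2 := by
      rw [hμsq]; nlinarith [hδsk.1, hδsk.2, hδk.1]
    exact lt_of_pow_lt_pow_left₀ 2 h1 h2
  have hdpos : (0:ℝ) < 1 - δsk - μ := by linarith
  -- measurements agree
  have hy0 : Φ.mulVec xstar = Φ.mulVec x := by
    have h1 : l2 (y - Φ.mulVec xstar) = 0 := le_antisymm hsol.1 (l2_nonneg _)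
    have h2 : y - Φ.mulVec xstar = 0 := l2_eq_zero h1
    have h3 : y = Φ.mulVec xstar := sub_eq_zero.1 h2
    exact h3.symm.trans hy
  have hΦh : Φ.mulVec h = 0 := by
    rw [hh, Matrix.mulVec_sub, hy0, sub_self]
  have hmin : l1 (restr Tᶜ xstar) ≤ l1 (restr Tᶜ x) := by
    apply hsol.2 x
    rw [hy, sub_self, l2_zero]
  -- block decomposition of h off Ω
  set Ω := T ∪ T₀ with hΩ
  obtain ⟨B, L, hBsub, hLsub, hBcard, hLcard, hsum, hbound⟩ :=
    blocks k hk (Ωᶜ).card Ωᶜ le_rfl (restr Ωᶜ h) (fun i hi => by simp [restr, hi])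
  have hCsubΩc : ∀ C ∈ L, C ⊆ Ωᶜ := fun C hC => (hLsub C hC).trans Finset.sdiff_subset
  have hBrw : restr B (restr Ωᶜ h) = restr B h := restr_restr hBsub h
  have hmapv : (L.map fun C => restr C (restr Ωᶜ h)) = L.map fun C => restr C h :=
    List.map_congr_left fun C hC => restr_restr (hCsubΩc C hC) h
  have hmapl2 : (L.map fun C => l2 (restr C (restr Ωᶜ h))) = L.map fun C => l2 (restr C h) :=
    List.map_congr_left fun C hC => by rw [restr_restr (hCsubΩc C hC) h]
  rw [hBrw, hmapv] at hsum
  rw [hmapl2] at hbound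
  set p := restr Ω h + restr B h with hp
  have hcomp : restr Ω h + restr Ωᶜ h = h := by
    funext i
    by_cases hi : i ∈ Ω <;> simp [restr, hi]
  have hsum2 : p + (L.map fun C => restr C h).sum = h := by
    rw [hp, add_assoc, hsum, hcomp]
  -- support cardinalities
  have hΩcard : Ω.card ≤ s + k := by
    calc Ω.card ≤ T.card + T₀.card := Finset.card_union_le T T₀
      _ = s + k := by rw [hs, hT₀card]
  have hsuppp : (Function.support p).ncard ≤ s + 2 * k := by
    have h1 : (Function.support p).ncard ≤ (Ω ∪ B).card := by
      apply ncard_support_le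
      intro i hi
      rw [Finset.mem_union]
      by_contra hc
      push_neg at hc
      apply hi
      rw [hp]
      simp [restr, hc.1, hc.2]
    have h2 : (Ω ∪ B).card ≤ Ω.card + B.card := Finset.card_union_le Ω B
    omega
  -- l2 quantities
  set A₁ := l2 (restr Ω h) with hA₁
  set B₁ := l2 (restr B h) with hB₁
  set P := l2 p with hP
  have hP0 : 0 ≤ P := l2_nonneg _
  have hdisjΩB : ∀ i, restr Ω h i = 0 ∨ restr B h i = 0 := by
    intro i
    by_cases hi : i ∈ Ω
    · right
      have : i ∉ B := fun hc => (Finset.mem_compl.1 (hBsub hc)) hi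
      simp [restr, this]
    · left; simp [restr, hi]
  have hPsq : P ^ 2 = A₁ ^ 2 + B₁ ^ 2 := l2_sq_add_disj hdisjΩB
  -- the key per-block inner product bound
  have hkey : ∀ C ∈ L,
      -(dotProduct (Φ.mulVec p) (Φ.mulVec (restr C h)))
        ≤ μ * P * l2 (restr C h) := by
    intro C hC
    have hCΩc : C ⊆ Ωᶜ := hCsubΩc C hC
    have hdisj1 : ∀ i, restr Ω h i = 0 ∨ restr C h i = 0 := by
      intro i
      by_cases hi : i ∈ Ω
      · right
        have : i ∉ C := fun hc => (Finset.mem_compl.1 (hCΩc hc)) hi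
        simp [restr, this]
      · left; simp [restr, hi]
    have hdisj2 : ∀ i, restr B h i = 0 ∨ restr C h i = 0 := by
      intro i
      by_cases hi : i ∈ B
      · right
        have : i ∉ C := fun hc => ((Finset.mem_sdiff.1 (hLsub C hC hc)).2) hi
        simp [restr, this]
      · left; simp [restr, hi]
    have hcard1 : (Function.support (restr Ω h)).ncard
        + (Function.support (restr C h)).ncard ≤ s + 2 * k := by
      have h1 := ncard_support_restr_le Ω h
      have h2 := ncard_support_restr_le C h
      have h3 := hLcard C hC
      omega
    have hcard2 : (Function.support (restr B h)).ncard
        + (Function.support (restr C h)).ncard ≤ 2 * k := by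
      have h1 := ncard_support_restr_le B h
      have h2 := ncard_support_restr_le C h
      have h3 := hLcard C hC
      omega
    have hc1 := cross hRIPsk hdisj1 hcard1
    have hc2 := cross hRIPk hdisj2 hcard2
    have hCS : δsk * A₁ + δk * B₁ ≤ μ * P := by
      have hA₁0 : 0 ≤ A₁ := l2_nonneg _
      have hB₁0 : 0 ≤ B₁ := l2_nonneg _
      have hsq : (δsk * A₁ + δk * B₁) ^ 2 ≤ (μ * P) ^ 2 := by
        have he : (μ * P) ^ 2 = (δsk ^ 2 + δk ^ 2) * (A₁ ^ 2 + B₁ ^ 2) := by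
          rw [mul_pow, hμsq, hPsq]
        rw [he]
        nlinarith [sq_nonneg (δsk * B₁ - δk * A₁)]
      exact le_of_pow_le_pow_left₀ two_ne_zero (mul_nonneg hμ0 hP0) hsq
    have hsplit : Φ.mulVec p = Φ.mulVec (restr Ω h) + Φ.mulVec (restr B h) := by
      rw [hp, Matrix.mulVec_add]
    calc -(dotProduct (Φ.mulVec p) (Φ.mulVec (restr C h)))
        ≤ |dotProduct (Φ.mulVec p) (Φ.mulVec (restr C h))| := neg_le_abs _
      _ = |dotProduct (Φ.mulVec (restr Ω h)) (Φ.mulVec (restr C h))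
            + dotProduct (Φ.mulVec (restr B h)) (Φ.mulVec (restr C h))| := by
          rw [hsplit, add_dotProduct]
      _ ≤ |dotProduct (Φ.mulVec (restr Ω h)) (Φ.mulVec (restr C h))|
            + |dotProduct (Φ.mulVec (restr B h)) (Φ.mulVec (restr C h))| := abs_add_le _ _
      _ ≤ δsk * (A₁ * l2 (restr C h)) + δk * (B₁ * l2 (restr C h)) := add_le_add hc1 hc2
      _ = (δsk * A₁ + δk * B₁) * l2 (restr C h) := by ring
      _ ≤ μ * P * l2 (restr C h) := mul_le_mul_of_nonneg_right hCS (l2_nonneg _)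
  -- energy bound
  set Sig := (L.map fun C => l2 (restr C h)).sum with hSigdef
  have hSig0 : 0 ≤ Sig := list_sum_nonneg _ _ fun C _ => l2_nonneg _
  have henergy : l2 (Φ.mulVec p) ^ 2 ≤ μ * P * Sig := by
    have h0 : Φ.mulVec p = -(Φ.mulVec ((L.map fun C => restr C h).sum)) := by
      have he : p = h - (L.map fun C => restr C h).sum := eq_sub_of_add_eq hsum2
      rw [he, Matrix.mulVec_sub, hΦh, zero_sub]
    have h1 : l2 (Φ.mulVec p) ^ 2
        = (L.map fun C => -(dotProduct (Φ.mulVec p) (Φ.mulVec (restr C h)))).sum := by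
      rw [l2_sq_dp]
      conv_lhs => rw [show (Φ.mulVec p) = Φ.mulVec p from rfl]
      nth_rewrite 2 [h0]
      rw [dotProduct_neg, mulVec_list_sum, dp_list_sum, List.map_map, list_sum_neg,
        List.map_map]
      rfl
    rw [h1]
    calc (L.map fun C => -(dotProduct (Φ.mulVec p) (Φ.mulVec (restr C h)))).sum
        ≤ (L.map fun C => μ * P * l2 (restr C h)).sum := list_sum_le _ _ _ hkey
      _ = μ * P * Sig := list_sum_mul _ _ _
  have hlow := (hRIPsk p hsuppp).1
  -- cone constraint
  have hkeycone : ∀ i, |restr Ωᶜ h i| + |restr Tᶜ x i|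
      ≤ |restr T₀ h i| + 2 * |(r - restr T₀ r) i| + |restr Tᶜ xstar i| := by
    intro i
    have e1 : |x i| ≤ |h i| + |xstar i| := by
      have : x i = h i + xstar i := by rw [hh]; simp
      rw [this]; exact abs_add_le _ _
    have e2 : |h i| ≤ |x i| + |xstar i| := by
      have : h i = x i + -(xstar i) := by rw [hh]; simp; ring
      rw [this]
      calc |x i + -(xstar i)| ≤ |x i| + |-(xstar i)| := abs_add_le _ _
        _ = |x i| + |xstar i| := by rw [abs_neg]
    by_cases hiT : i ∈ T
    · have g1 : restr Ωᶜ h i = 0 := by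
        simp [restr, hΩ, Finset.mem_compl, Finset.mem_union, hiT]
      have g2 : restr Tᶜ x i = 0 := by simp [restr, hiT]
      have g3 : restr Tᶜ xstar i = 0 := by simp [restr, hiT]
      rw [g1, g2, g3]
      simp only [abs_zero, add_zero, zero_add]
      positivity
    · by_cases hiT0 : i ∈ T₀
      · have g1 : restr Ωᶜ h i = 0 := by
          simp [restr, hΩ, Finset.mem_compl, Finset.mem_union, hiT0]
        have g2 : restr Tᶜ x i = x i := by simp [restr, hiT]
        have g3 : restr Tᶜ xstar i = xstar i := by simp [restr, hiT]
        have g4 : (r - restr T₀ r) i = 0 := by simp [restr, hiT0]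
        have g5 : restr T₀ h i = h i := by simp [restr, hiT0]
        rw [g1, g2, g3, g4, g5]
        simp only [abs_zero, zero_add, mul_zero, add_zero]
        linarith [e1]
      · have g1 : restr Ωᶜ h i = h i := by
          simp [restr, hΩ, Finset.mem_compl, Finset.mem_union, hiT, hiT0]
        have g2 : restr Tᶜ x i = x i := by simp [restr, hiT]
        have g3 : restr Tᶜ xstar i = xstar i := by simp [restr, hiT]
        have g4 : (r - restr T₀ r) i = x i := by
          simp [restr, hiT0, hr, hiT]
        have g5 : restr T₀ h i = 0 := by simp [restr, hiT0]
        rw [g1, g2, g3, g4, g5]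
        simp only [abs_zero, zero_add]
        linarith [e2]
  have hcone : l1 (restr Ωᶜ h) ≤ l1 (restr T₀ h) + 2 * l1 (r - restr T₀ r) := by
    have h1 : ∑ i, (|restr Ωᶜ h i| + |restr Tᶜ x i|)
        ≤ ∑ i, (|restr T₀ h i| + 2 * |(r - restr T₀ r) i| + |restr Tᶜ xstar i|) :=
      Finset.sum_le_sum fun i _ => hkeycone i
    simp only [Finset.sum_add_distrib, ← Finset.mul_sum] at h1
    simp only [l1] at hmin ⊢
    linarith
  -- Cauchy-Schwarz on T₀
  have hCS1 : l1 (restr T₀ h) ≤ Real.sqrt k * l2 (restr T₀ h) := by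
    have h1 : l1 (restr T₀ h) ^ 2 ≤ (k:ℝ) * l2 (restr T₀ h) ^ 2 := by
      rw [l1_restr, l2_sq_restr]
      have hcs := Finset.sum_mul_sq_le_sq_mul_sq T₀ (fun _ => (1:ℝ)) (fun i => |h i|)
      simp only [one_mul, one_pow, sq_abs] at hcs
      calc (∑ i ∈ T₀, |h i|) ^ 2 ≤ (∑ _i ∈ T₀, (1:ℝ)) * ∑ i ∈ T₀, h i ^ 2 := hcs
        _ = (k:ℝ) * ∑ i ∈ T₀, h i ^ 2 := by
            rw [Finset.sum_const, hT₀card, nsmul_eq_mul, mul_one]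
    have h2 : Real.sqrt k * l2 (restr T₀ h) = Real.sqrt ((k:ℝ) * l2 (restr T₀ h) ^ 2) := by
      rw [Real.sqrt_mul hk0.le, Real.sqrt_sq (l2_nonneg _)]
    rw [h2, ← Real.sqrt_sq (l1_nonneg (restr T₀ h))]
    exact Real.sqrt_le_sqrt h1
  have hT₀p : restr T₀ h = restr T₀ p := by
    funext i
    by_cases hi : i ∈ T₀
    · have hiΩ : i ∈ Ω := by rw [hΩ]; exact Finset.mem_union_right _ hi
      have hiB : i ∉ B := fun hc => (Finset.mem_compl.1 (hBsub hc)) hiΩ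
      simp [restr, hi, hp, hiΩ, hiB]
    · simp [restr, hi]
  have hT₀P : l2 (restr T₀ h) ≤ P := by
    rw [hT₀p]; exact l2_restr_le _ _
  -- putting the tail bound together
  set E := (Real.sqrt k)⁻¹ * l1 (r - restr T₀ r) with hE
  have hE0 : 0 ≤ E := mul_nonneg (by positivity) (l1_nonneg _)
  have hSig2 : Sig ≤ P + 2 * E := by
    have h1 : l1 (restr Ωᶜ h) ≤ Real.sqrt k * P + 2 * l1 (r - restr T₀ r) := by
      have := mul_le_mul_of_nonneg_left hT₀P (Real.sqrt_nonneg (k:ℝ))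
      linarith [hcone, hCS1]
    calc Sig ≤ (Real.sqrt k)⁻¹ * l1 (restr Ωᶜ h) := hbound
      _ ≤ (Real.sqrt k)⁻¹ * (Real.sqrt k * P + 2 * l1 (r - restr T₀ r)) :=
          mul_le_mul_of_nonneg_left h1 (by positivity)
      _ = P + 2 * E := by
          rw [hE]
          field_simp
  -- final assembly
  have hPbound : (1 - δsk - μ) * P ≤ 2 * μ * E := by
    rcases hP0.eq_or_lt with hP0' | hPpos
    · rw [← hP0', mul_zero]
      exact mul_nonneg (mul_nonneg (by norm_num) hμ0) hE0
    · have hstep : (1 - δsk) * P ^ 2 ≤ μ * P * (P + 2 * E) := by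
        calc (1 - δsk) * P ^ 2 ≤ l2 (Φ.mulVec p) ^ 2 := hlow
          _ ≤ μ * P * Sig := henergy
          _ ≤ μ * P * (P + 2 * E) :=
              mul_le_mul_of_nonneg_left hSig2 (mul_nonneg hμ0 hP0)
      nlinarith [hstep, hPpos]
  have hhle : l2 h ≤ 2 * P + 2 * E := by
    have h1 : l2 h ≤ P + Sig := by
      calc l2 h = l2 (p + (L.map fun C => restr C h).sum) := by rw [hsum2]
        _ ≤ l2 p + l2 ((L.map fun C => restr C h).sum) := l2_add_le _ _
        _ ≤ P + Sig := by
            have h2 := l2_list_sum_le (L.map fun C => restr C h)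
            rw [List.map_map] at h2
            have h3 : (List.map (l2 ∘ fun C => restr C h) L).sum = Sig := rfl
            rw [h3] at h2
            linarith
    linarith [hSig2]
  rw [div_mul_eq_mul_div, le_div_iff₀ hdpos]
  have hmul := mul_le_mul_of_nonneg_right hhle hdpos.le
  nlinarith [hPbound, hE0, hμ0]
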